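/- Let (a_n)_{n≥1} and (b_n)_{n≥1} be nonnegative real sequences such that ∑_{n=1}^∞ b_n = ∞ and a_n = o(b_{n−1}) as n → ∞. Then there exists a strictly increasing sequence of indices (n_k)_{k≥1} such that ∑_{k=1}^∞ b_{n_k} = ∞ and a_{n_k} = o(b_{n_k}) as k → ∞. -/

import Mathlib

open Filter

/-- `a k = o(b k)` as `k → ∞`: for every `ε > 0` eventually `a k ≤ ε * b k`. -/
def IsLittleO (a b : ℕ → ℝ) : Prop := ∀ ε : ℝ, 0 < ε → ∃ N, ∀ k, N ≤ k → a k ≤ ε * b k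

/-- If `∑ b_n = ∞` and `a_n = o(b_{n-1})`, then along some subsequence
`∑ b_{n_k} = ∞` and `a_{n_k} = o(b_{n_k})`. -/
theorem stmt_7 (a b : ℕ → ℝ) (ha : ∀ m, 0 ≤ a m) (hb : ∀ m, 0 ≤ b m)
    (hbsum : ¬ Summable b)
    (hao : ∀ ε : ℝ, 0 < ε → ∃ N, ∀ m, N ≤ m → a (m + 1) ≤ ε * b m) :
    ∃ n : ℕ → ℕ, StrictMono n ∧ (¬ Summable (fun k => b (n k))) ∧
      IsLittleO (fun k => a (n k)) (fun k => b (n k)) := by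
  classical
  set Q : ℕ → Prop := fun j => b j ≤ 2 * b (j + 1) with hQdef
  -- key partial sum bound
  have key : ∀ n, (∑ i ∈ Finset.range (n+1), b i) + b n ≤
      2 * (b 0 + ∑ j ∈ Finset.range n, if Q j then b (j+1) else 0) := by
    intro n
    induction n with
    | zero => norm_num [Finset.sum_range_one]; ring_nf; linarith [hb 0]
    | succ n ih =>
      rw [Finset.sum_range_succ (f := b), Finset.sum_range_succ (f := fun j => if Q j then b (j+1) else 0)]
      by_cases hq : Q n
      · rw [if_pos hq]
        linarith [hb n]
      · rw [if_neg hq]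
        have h2 : 2 * b (n+1) < b n := not_le.mp hq
        linarith
  have bound : ∀ n C, (∑ j ∈ Finset.range n, if Q j then b (j+1) else 0) ≤ C →
      (∑ i ∈ Finset.range n, b i) ≤ 2 * (b 0 + C) := by
    intro n C hC
    have h1 : (∑ i ∈ Finset.range n, b i) ≤ (∑ i ∈ Finset.range (n+1), b i) + b n := by
      rw [Finset.sum_range_succ]; linarith [hb n]
    linarith [key n, h1]
  have hQinf : (setOf Q).Infinite := by
    by_contra hfin
    rw [Set.not_infinite] at hfin
    apply hbsum
    apply summable_of_sum_range_le hb (c := 2 * (b 0 + ∑ j ∈ hfin.toFinset, b (j+1)))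
    intro n
    apply bound
    rw [← Finset.sum_filter]
    apply Finset.sum_le_sum_of_subset_of_nonneg
    · intro j hj
      simp only [Finset.mem_filter] at hj
      exact hfin.mem_toFinset.mpr hj.2
    · intro j _ _; exact hb (j+1)
  have hmono : StrictMono (Nat.nth Q) := Nat.nth_strictMono hQinf
  have hmem : ∀ k, Q (Nat.nth Q k) := fun k => Nat.nth_mem_of_infinite hQinf k
  refine ⟨fun k => Nat.nth Q k + 1, ?_, ?_, ?_⟩
  · intro i j hij
    simpa using hmono hij
  · intro hs
    apply hbsum
    apply summable_of_sum_range_le hb (c := 2 * (b 0 + ∑' k, b (Nat.nth Q k + 1)))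
    intro n
    apply bound
    rw [← Finset.sum_filter]
    have himg : (∑ j ∈ (Finset.range n).filter Q, b (j+1)) =
        ∑ k ∈ ((Finset.range n).filter Q).image (Nat.count Q), b (Nat.nth Q k + 1) := by
      rw [Finset.sum_image]
      · apply Finset.sum_congr rfl
        intro j hj
        simp only [Finset.mem_filter] at hj
        rw [Nat.nth_count hj.2]
      · intro x hx y hy hxy
        simp only [Finset.coe_filter, Finset.mem_coe, Finset.mem_filter, Set.mem_setOf_eq] at hx hy
        rw [← Nat.nth_count hx.2, ← Nat.nth_count hy.2, hxy]
    rw [himg]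
    exact Summable.sum_le_tsum _ (fun k _ => hb _) hs
  · intro ε hε
    obtain ⟨N, hN⟩ := hao (ε/2) (by linarith)
    refine ⟨N, fun k hk => ?_⟩
    have hle : N ≤ Nat.nth Q k := le_trans hk hmono.le_apply
    have h1 := hN _ hle
    have h2 : b (Nat.nth Q k) ≤ 2 * b (Nat.nth Q k + 1) := hmem k
    have h3 : (ε/2) * b (Nat.nth Q k) ≤ (ε/2) * (2 * b (Nat.nth Q k + 1)) :=
      mul_le_mul_of_nonneg_left h2 (by linarith)
    simp only []
    linarith
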